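/- For every nontrivial braid b in B_3^+ and every natural number t, one has b{t} < b in the braid order. -/

import Mathlib

namespace Braid3

/-! ### The positive 3-strand braid monoid
presented by σ1, σ2 (letters `0`, `1` of `Fin 2`) with the relation σ1σ2σ1 = σ2σ1σ2. -/

def braidRel : FreeMonoid (Fin 2) → FreeMonoid (Fin 2) → Prop := fun u v =>
  u = FreeMonoid.of 0 * FreeMonoid.of 1 * FreeMonoid.of 0 ∧
  v = FreeMonoid.of 1 * FreeMonoid.of 0 * FreeMonoid.of 1

def braidCon : Con (FreeMonoid (Fin 2)) := conGen braidRel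

/-- The positive 3-strand braid monoid `B₃⁺`. -/
abbrev B3P := braidCon.Quotient

/-- The element of `B₃⁺` represented by a word on the alphabet {σ1, σ2}. -/
def mkw (w : List (Fin 2)) : B3P := braidCon.mk' (FreeMonoid.ofList w)

/-- σ1 as an element of B₃⁺. -/
def s1 : B3P := mkw [0]
/-- σ2 as an element of B₃⁺. -/
def s2 : B3P := mkw [1]
/-- Garside's fundamental braid Δ₃ = σ1σ2σ1. -/
def Δ : B3P := mkw [0, 1, 0]

/-! ### The 3-strand braid group B₃, with the same presentation. -/

def grpRels : Set (FreeGroup (Fin 2)) :=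
  { FreeGroup.of 0 * FreeGroup.of 1 * FreeGroup.of 0 *
    (FreeGroup.of 1 * FreeGroup.of 0 * FreeGroup.of 1)⁻¹ }

abbrev B3 := PresentedGroup grpRels

def g (i : Fin 2) : B3 := PresentedGroup.of i

theorem grp_braid_rel : g 0 * g 1 * g 0 = g 1 * g 0 * g 1 := by
  show (QuotientGroup.mk (FreeGroup.of 0 * FreeGroup.of 1 * FreeGroup.of 0) : B3)
      = QuotientGroup.mk (FreeGroup.of 1 * FreeGroup.of 0 * FreeGroup.of 1)
  rw [QuotientGroup.eq]
  have h : (FreeGroup.of 0 * FreeGroup.of 1 * FreeGroup.of 0 *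
      (FreeGroup.of 1 * FreeGroup.of 0 * FreeGroup.of 1)⁻¹ : FreeGroup (Fin 2)) ∈
      Subgroup.normalClosure grpRels :=
    Subgroup.subset_normalClosure rfl
  have h2 := (Subgroup.normalClosure_normal (s := grpRels)).conj_mem _ h
      (FreeGroup.of 0 * FreeGroup.of 1 * FreeGroup.of 0)⁻¹
  simp only [inv_inv] at h2
  have h3 : ((FreeGroup.of 0 * FreeGroup.of 1 * FreeGroup.of 0 : FreeGroup (Fin 2)))⁻¹ *
      (FreeGroup.of 0 * FreeGroup.of 1 * FreeGroup.of 0 *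
        (FreeGroup.of 1 * FreeGroup.of 0 * FreeGroup.of 1)⁻¹) *
      (FreeGroup.of 0 * FreeGroup.of 1 * FreeGroup.of 0) =
      ((FreeGroup.of 0 * FreeGroup.of 1 * FreeGroup.of 0 : FreeGroup (Fin 2))⁻¹ *
        (FreeGroup.of 1 * FreeGroup.of 0 * FreeGroup.of 1))⁻¹ := by
    group
  rw [h3] at h2
  exact (Subgroup.inv_mem_iff _).mp h2

/-- The canonical embedding of B₃⁺ into B₃. -/
def ι : B3P →* B3 :=
  Con.lift _ (FreeMonoid.lift fun i => g i) (by
    refine Con.conGen_le.mpr fun u v h => ?_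
    obtain ⟨hu, hv⟩ := h
    subst hu; subst hv
    rw [Con.ker_rel]
    simp only [map_mul, FreeMonoid.lift_eval_of]
    exact grp_braid_rel)

/-! ### The braid order -/

/-- Evaluation in B₃ of a word on the letters σ1^{±1}, σ2^{±1}
(a letter `(i, true)` is σ_{i+1}, a letter `(i, false)` is σ_{i+1}⁻¹). -/
def evalSW (w : List (Fin 2 × Bool)) : B3 :=
  (w.map fun l => if l.2 then g l.1 else (g l.1)⁻¹).prod

/-- A signed word is σ-positive if the generator of highest occurring index occurs,
and occurs only positively. -/
def SigmaPos (w : List (Fin 2 × Bool)) : Prop :=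
  ∃ i : Fin 2, (i, true) ∈ w ∧ (i, false) ∉ w ∧ ∀ l ∈ w, l.1 ≤ i

/-- The braid order on the group B₃. -/
def gLt (a b : B3) : Prop := ∃ w, SigmaPos w ∧ evalSW w = a⁻¹ * b

/-- The braid order on B₃⁺. -/
def blt (a b : B3P) : Prop := gLt (ι a) (ι b)

def ble (a b : B3P) : Prop := blt a b ∨ a = b

/-! ### ϕ-normal words and exponent sequences -/

/-- The minimal legal sizes e_k^min. -/
def emin : ℕ → ℕ
  | 1 => 0
  | 2 => 1
  | _ => 2

/-- The letter of the k-th block (1-based, from the right): σ1 for odd k, σ2 for even k. -/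
def letterOf (k : ℕ) : Fin 2 := if k % 2 = 1 then 0 else 1

/-- The word σ_{[p]}^{e_p} ⋯ σ2^{e_2} σ1^{e_1} associated with the exponent
sequence `E = [e_p, …, e_1]`. -/
def wordOfExpSeq : List ℕ → List (Fin 2)
  | [] => []
  | e :: rest => List.replicate e (letterOf (rest.length + 1)) ++ wordOfExpSeq rest

/-- `expAt E k` is e_k, the k-th entry of the exponent sequence counted from the right,
1-based. -/
def expAt (E : List ℕ) (k : ℕ) : ℕ := E.getD (E.length - k) 0

/-- `E = [e_p, …, e_1]` is the exponent sequence of a ϕ-normal word: the final block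
decomposition is minimal (leading exponent nonzero) and e_k ≥ e_k^min for k < p. -/
def IsNormalSeq (E : List ℕ) : Prop :=
  E ≠ [] ∧ 1 ≤ expAt E E.length ∧ ∀ k, 1 ≤ k → k < E.length → emin k ≤ expAt E k

/-- A word on {σ1, σ2} is ϕ-normal if its (minimal) block decomposition
σ_{[p]}^{e_p} ⋯ σ2^{e_2} σ1^{e_1} satisfies e_k ≥ e_k^min for k < p. -/
def IsPhiNormalWord (w : List (Fin 2)) : Prop :=
  ∃ E, IsNormalSeq E ∧ w = wordOfExpSeq E

/-- `E` is the exponent sequence of the braid `b`. -/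
def HasExpSeq (b : B3P) (E : List ℕ) : Prop :=
  IsNormalSeq E ∧ mkw (wordOfExpSeq E) = b

/-- The exponent sequence of a (nontrivial) braid of B₃⁺. -/
noncomputable def expSeqOf (b : B3P) : List ℕ := by
  classical exact if h : ∃ E, HasExpSeq b E then h.choose else []

/-- The critical position of an exponent sequence: the least r < p with e_r > e_r^min
if it exists, and p otherwise. -/
noncomputable def critPos (E : List ℕ) : ℕ := by
  classical exact
    if h : ∃ r, 1 ≤ r ∧ r < E.length ∧ emin r < expAt E r then Nat.find h else E.length

/-- The effect of the operation b ↦ b{t} on exponent sequences: remove one letter from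
the critical block, and add t letters to the next block if the latter exists. -/
noncomputable def stepSeq (E : List ℕ) (t : ℕ) : List ℕ :=
  let p := E.length
  let r := critPos E
  let E1 := E.set (p - r) (expAt E r - 1)
  if 2 ≤ r then E1.set (p - (r - 1)) (expAt E (r - 1) + t) else E1

/-- The operation b ↦ b{t} of Definition 2.2 (with 1{t} = 1). -/
noncomputable def step (b : B3P) (t : ℕ) : B3P := by
  classical exact if b = 1 then 1 else mkw (wordOfExpSeq (stepSeq (expSeqOf b) t))

/-- The G₃-sequence from b: `gseq b 0 = b`, `gseq b t = (gseq b (t-1)){t}`. -/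
noncomputable def gseq (b : B3P) : ℕ → B3P
  | 0 => b
  | t + 1 => step (gseq b t) (t + 1)

/-- T(b): the length of the G₃-sequence from b, i.e. the least t with b{1}{2}⋯{t} = 1. -/
noncomputable def T (b : B3P) : ℕ := sInf {t | gseq b t = 1}

/-! ### The ordinal of a 3-braid, fundamental sequences, the Hardy hierarchy -/

open Ordinal in
/-- Sum Σ ω^{k-1}·(e_k − e_k^min) over the tail of an exponent sequence. -/
noncomputable def ordSeqAux : List ℕ → Ordinal
  | [] => 0
  | e :: rest =>
    omega0 ^ (rest.length : Ordinal) * ((e - emin (rest.length + 1) : ℕ) : Ordinal)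
      + ordSeqAux rest

open Ordinal in
/-- ord of an exponent sequence (e_p, …, e_1):
ω^{p−1}·e_p + Σ_{p>k≥1} ω^{k−1}·(e_k − e_k^min). -/
noncomputable def ordSeq : List ℕ → Ordinal
  | [] => 0
  | e :: rest => omega0 ^ (rest.length : Ordinal) * (e : Ordinal) + ordSeqAux rest

/-- The ordinal ord(b) < ω^ω attached to a braid of B₃⁺ (with ord(1) = 0). -/
noncomputable def ordOf (b : B3P) : Ordinal := ordSeq (expSeqOf b)

open Ordinal in
/-- Fundamental sequences: 0[x] = 0, (α+1)[x] = α, (γ + ω^{r+1})[x] = γ + ω^r·x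
(CNF decomposition), and (ω^ω)[x] = ω^x. -/
noncomputable def fundSeq (α : Ordinal) (x : ℕ) : Ordinal :=
  open scoped Classical in
  if α = 0 then 0
  else if h : ∃ β, α = β + 1 then h.choose
  else if α = omega0 ^ omega0 then omega0 ^ (x : Ordinal)
  else if h : ∃ p : Ordinal × ℕ, α = p.1 + omega0 ^ ((p.2 : Ordinal) + 1) ∧
      omega0 ^ ((p.2 : Ordinal) + 1) ∣ p.1
    then h.choose.1 + omega0 ^ (h.choose.2 : Ordinal) * (x : Ordinal)
  else 0

open Ordinal in
theorem fundSeq_lt (α : Ordinal) (x : ℕ) (h0 : ¬α = 0) (hs : ¬∃ β, α = β + 1) :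
    fundSeq α x < α := by
  classical
  rw [fundSeq]
  rw [if_neg h0, dif_neg hs]
  by_cases hw : α = omega0 ^ omega0
  · rw [if_pos hw, hw]
    exact (Ordinal.opow_lt_opow_iff_right Ordinal.one_lt_omega0).mpr (Ordinal.nat_lt_omega0 x)
  · rw [if_neg hw]
    by_cases hd : ∃ p : Ordinal × ℕ, α = p.1 + omega0 ^ ((p.2 : Ordinal) + 1) ∧
        omega0 ^ ((p.2 : Ordinal) + 1) ∣ p.1
    · rw [dif_pos hd]
      obtain ⟨hα, -⟩ := hd.choose_spec
      have hlt : omega0 ^ ((hd.choose.2 : Ordinal)) * (x : Ordinal)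
          < omega0 ^ ((hd.choose.2 : Ordinal) + 1) := by
        rw [Ordinal.add_one_eq_succ, Ordinal.opow_succ]
        exact mul_lt_mul_of_pos_left (Ordinal.nat_lt_omega0 x)
          (Ordinal.opow_pos _ Ordinal.omega0_pos)
      calc hd.choose.1 + omega0 ^ (hd.choose.2 : Ordinal) * (x : Ordinal)
          < hd.choose.1 + omega0 ^ ((hd.choose.2 : Ordinal) + 1) :=
            (add_lt_add_iff_left _).mpr hlt
        _ = α := hα.symm
    · rw [dif_neg hd]
      exact pos_iff_ne_zero.mpr h0

open Ordinal in
open scoped Classical in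
/-- The Hardy hierarchy: H_0(x) = x, H_{α+1}(x) = H_α(x+1), H_λ(x) = H_{λ[x]}(x+1). -/
noncomputable def hardy (α : Ordinal) (x : ℕ) : ℕ :=
  if α = 0 then x
  else if h : ∃ β, α = β + 1 then hardy h.choose (x + 1)
  else hardy (fundSeq α x) (x + 1)
termination_by α
decreasing_by
  · have hs := h.choose_spec
    have h2 : h.choose < h.choose + 1 := by
      rw [Ordinal.add_one_eq_succ]; exact Order.lt_succ _
    exact lt_of_lt_of_eq h2 hs.symm
  · exact fundSeq_lt _ _ (by assumption) (by assumption)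

/-! ### Garside complexity -/

/-- The Garside complexity ‖b‖: the least ℓ such that b left-divides Δ₃^ℓ. -/
noncomputable def compl (b : B3P) : ℕ := sInf {ℓ | ∃ c, b * c = Δ ^ ℓ}



/-! ### Auxiliary material for the proof of `step_lt` -/

section StepLtAux

private lemma fin2_le_one (i : Fin 2) : i ≤ 1 := Fin.le_last i

private lemma fin2_cases : ∀ a : Fin 2, a = 0 ∨ a = 1 := by decide

/-- Evaluation of positive words in B₃. -/
def gp (w : List (Fin 2)) : B3 := (w.map g).prod

lemma gp_nil : gp [] = 1 := rfl

lemma gp_append (u v : List (Fin 2)) : gp (u ++ v) = gp u * gp v := by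
  simp [gp]

lemma gp_replicate (n : ℕ) (i : Fin 2) : gp (List.replicate n i) = (g i) ^ n := by
  simp [gp]

lemma iota_mkw (w : List (Fin 2)) : ι (mkw w) = gp w := by
  unfold ι mkw
  erw [Con.lift_mk']
  rw [FreeMonoid.lift_apply, FreeMonoid.toList_ofList, gp]

lemma mkw_nil : mkw [] = 1 := map_one braidCon.mk'

lemma evalSW_append (u v : List (Fin 2 × Bool)) : evalSW (u ++ v) = evalSW u * evalSW v := by
  simp [evalSW]

lemma evalSW_rep_true (n : ℕ) (i : Fin 2) :
    evalSW (List.replicate n (i, true)) = (g i) ^ n := by simp [evalSW]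

lemma evalSW_rep_false (n : ℕ) (i : Fin 2) :
    evalSW (List.replicate n (i, false)) = ((g i)⁻¹) ^ n := by simp [evalSW]

lemma evalSW_pos (w : List (Fin 2)) : evalSW (w.map (fun i => (i, true))) = gp w := by
  simp only [evalSW, gp, List.map_map]
  rfl

lemma evalSW_single_true (i : Fin 2) : evalSW [(i, true)] = g i := by
  simp [evalSW]

lemma evalSW_witness (k l : ℕ) :
    evalSW (List.replicate k ((0 : Fin 2), true) ++
        ((1 : Fin 2), true) :: List.replicate l ((0 : Fin 2), false))
      = (g 0)^k * (g 1 * ((g 0)⁻¹)^l) := by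
  rw [show ((1 : Fin 2), true) :: List.replicate l ((0 : Fin 2), false)
      = [((1 : Fin 2), true)] ++ List.replicate l ((0 : Fin 2), false) from rfl]
  rw [evalSW_append, evalSW_append, evalSW_rep_true, evalSW_rep_false, evalSW_single_true]

/-! Group relations in B₃. -/

lemma relR1 : (g 0)⁻¹ * (g 1) * (g 0) = g 1 * g 0 * (g 1)⁻¹ := by
  calc (g 0)⁻¹ * (g 1) * (g 0)
      = (g 0)⁻¹ * (g 1 * g 0 * g 1) * (g 1)⁻¹ := by group
    _ = (g 0)⁻¹ * (g 0 * g 1 * g 0) * (g 1)⁻¹ := by rw [← grp_braid_rel]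
    _ = g 1 * g 0 * (g 1)⁻¹ := by group

lemma relR2 : (g 1)⁻¹ * (g 0) * (g 1) = g 0 * g 1 * (g 0)⁻¹ := by
  calc (g 1)⁻¹ * (g 0) * (g 1)
      = (g 1)⁻¹ * (g 0 * g 1 * g 0) * (g 0)⁻¹ := by group
    _ = (g 1)⁻¹ * (g 1 * g 0 * g 1) * (g 0)⁻¹ := by rw [grp_braid_rel]
    _ = g 0 * g 1 * (g 0)⁻¹ := by group

lemma conjp {G : Type*} [Group G] (a b : G) (n : ℕ) : (a⁻¹ * b * a)^n = a⁻¹ * b^n * a := by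
  simpa using conj_pow (i := n) (a := a⁻¹) (b := b)

lemma conj2 {G : Type*} [Group G] (W b c : G) : (b*(b*W))⁻¹ * c * (b*(b*W))
    = (W⁻¹*b*W)⁻¹ * ((W⁻¹*b*W)⁻¹ * ((W⁻¹*c*W) * ((W⁻¹*b*W) * (W⁻¹*b*W)))) := by group

/-! List lemmas. -/

lemma getD_append' {α : Type*} (F l : List α) (n : ℕ) (d : α) :
    (F ++ l).getD (F.length + n) d = l.getD n d := by
  induction F with
  | nil => simp
  | cons a F ih =>
    have h : (a :: F).length + n = (F.length + n) + 1 := by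
      rw [List.length_cons]; omega
    rw [List.cons_append, h, List.getD_cons_succ]; exact ih

lemma set_append' {α : Type*} (F l : List α) (n : ℕ) (v : α) :
    (F ++ l).set (F.length + n) v = F ++ l.set n v := by
  induction F with
  | nil => simp
  | cons a F ih =>
    have h : (a :: F).length + n = (F.length + n) + 1 := by
      rw [List.length_cons]; omega
    rw [List.cons_append, h, List.set_cons_succ, ih, List.cons_append]

lemma split_at (E : List ℕ) (n : ℕ) (h : n < E.length) :
    ∃ F x G, E = F ++ x :: G ∧ F.length = n ∧ G.length = E.length - (n+1) := by
  induction E generalizing n with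
  | nil => simp at h
  | cons a E ih =>
    cases n with
    | zero => exact ⟨[], a, E, rfl, rfl, by simp⟩
    | succ n =>
      obtain ⟨F, x, G, h1, h2, h3⟩ := ih n (by simpa using h)
      refine ⟨a :: F, x, G, by rw [h1]; rfl, by simp [h2], ?_⟩
      rw [h3]; simp

/-! expAt lemmas. -/

lemma expAt_cons (e : ℕ) (G : List ℕ) (k : ℕ) (hk : k ≤ G.length) :
    expAt (e :: G) k = expAt G k := by
  have h : (e :: G).length - k = (G.length - k) + 1 := by
    rw [List.length_cons]; omega
  rw [expAt, h, List.getD_cons_succ]; rfl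

lemma expAt_head (e : ℕ) (G : List ℕ) : expAt (e :: G) (G.length + 1) = e := by
  have h : (e :: G).length - (G.length + 1) = 0 := by rw [List.length_cons]; omega
  rw [expAt, h, List.getD_cons_zero]

lemma expAt_append_tail (F : List ℕ) (e : ℕ) (G : List ℕ) (k : ℕ) (hk : k ≤ G.length) :
    expAt (F ++ e :: G) k = expAt G k := by
  have h : (F ++ e :: G).length - k = F.length + ((G.length - k) + 1) := by
    rw [List.length_append, List.length_cons]; omega
  rw [expAt, h, getD_append', List.getD_cons_succ]; rfl

lemma expAt_append_head (F : List ℕ) (e : ℕ) (G : List ℕ) :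
    expAt (F ++ e :: G) (G.length + 1) = e := by
  have h : (F ++ e :: G).length - (G.length + 1) = F.length + 0 := by
    rw [List.length_append, List.length_cons]; omega
  rw [expAt, h, getD_append', List.getD_cons_zero]

/-! wordOfExpSeq lemmas. -/

lemma wordOfExpSeq_nil : wordOfExpSeq [] = [] := rfl

lemma wordOfExpSeq_cons (e : ℕ) (rest : List ℕ) :
    wordOfExpSeq (e :: rest) =
      List.replicate e (letterOf (rest.length + 1)) ++ wordOfExpSeq rest := rfl

/-- The prefix contribution of `F` to `wordOfExpSeq (F ++ R)`, where `n = R.length`. -/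
def wshift : List ℕ → ℕ → List (Fin 2)
  | [], _ => []
  | e :: rest, n => List.replicate e (letterOf (rest.length + n + 1)) ++ wshift rest n

lemma wshift_cons (e : ℕ) (F : List ℕ) (n : ℕ) :
    wshift (e :: F) n = List.replicate e (letterOf (F.length + n + 1)) ++ wshift F n := rfl

lemma wordOfExpSeq_append (F R : List ℕ) :
    wordOfExpSeq (F ++ R) = wshift F R.length ++ wordOfExpSeq R := by
  induction F with
  | nil => rfl
  | cons e F ih =>
    rw [List.cons_append, wordOfExpSeq_cons, wshift_cons, ih, List.length_append,
      List.append_assoc]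

lemma letterOf_one : letterOf 1 = 0 := rfl

lemma letterOf_two : letterOf 2 = 1 := rfl

lemma letterOf_add_two (k : ℕ) : letterOf (k + 2) = letterOf k := by
  simp [letterOf, Nat.add_mod_right]

/-! The key conjugation computation on minimal tails. -/

lemma tail_conj : ∀ (n : ℕ) (G : List ℕ), G.length = n + 2 →
    (∀ k, 1 ≤ k → k ≤ G.length → expAt G k = emin k) →
    (gp (wordOfExpSeq G))⁻¹ * g (letterOf (n + 3)) * gp (wordOfExpSeq G)
      = (g 0)^(n+1) * g 1 * ((g 0)^(n+1))⁻¹ ∧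
    (gp (wordOfExpSeq G))⁻¹ * g (letterOf (n + 2)) * gp (wordOfExpSeq G)
      = (g 0)^(n+1) * (g 1 * g 0 * (g 1)⁻¹) * ((g 0)^(n+1))⁻¹ := by
  intro n
  induction n with
  | zero =>
    intro G hlen hmin
    rcases G with _ | ⟨e1, G'⟩
    · simp at hlen
    rcases G' with _ | ⟨e0, G''⟩
    · simp at hlen
    rcases G'' with _ | ⟨a, G₃⟩
    case cons => exfalso; simp at hlen
    have h0 : e0 = 0 := hmin 1 (by omega) (by simp)
    have h1 : e1 = 1 := hmin 2 (by omega) (by simp)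
    subst h0; subst h1
    have hw : gp (wordOfExpSeq [1, 0]) = g 1 := by
      simp [wordOfExpSeq, gp, letterOf]
    rw [hw]
    constructor
    · rw [show letterOf 3 = 0 from rfl, pow_one]
      exact relR2
    · rw [show letterOf 2 = 1 from rfl, pow_one]
      calc (g 1)⁻¹ * g 1 * g 1 = g 0 * ((g 0)⁻¹ * g 1 * g 0) * (g 0)⁻¹ := by group
        _ = g 0 * (g 1 * g 0 * (g 1)⁻¹) * (g 0)⁻¹ := by rw [relR1]
  | succ n ih =>
    intro G hlen hmin
    rcases G with _ | ⟨e, G₂⟩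
    · simp at hlen
    have hG₂ : G₂.length = n + 2 := by simpa using hlen
    have hmin₂ : ∀ k, 1 ≤ k → k ≤ G₂.length → expAt G₂ k = emin k := by
      intro k hk1 hk2
      rw [← expAt_cons e G₂ k hk2]
      exact hmin k hk1 (by simp; omega)
    obtain ⟨ihA, ihB⟩ := ih G₂ hG₂ hmin₂
    have he : e = 2 := by
      have h := hmin (G₂.length + 1) (by omega) (by simp)
      rw [expAt_head, hG₂] at h
      exact h.trans rfl
    subst he
    have hw : gp (wordOfExpSeq (2 :: G₂))
        = g (letterOf (n + 3)) * (g (letterOf (n + 3)) * gp (wordOfExpSeq G₂)) := by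
      rw [wordOfExpSeq_cons, gp_append, gp_replicate, hG₂, pow_two, mul_assoc]
    rw [hw]
    have hl4 : letterOf (n + 1 + 3) = letterOf (n + 2) := by
      rw [show n + 1 + 3 = (n + 2) + 2 from by omega, letterOf_add_two]
    have hl3 : letterOf (n + 1 + 2) = letterOf (n + 3) := by
      rw [show n + 1 + 2 = n + 3 from rfl]
    constructor
    · rw [hl4, conj2]
      rw [ihA, ihB]
      have hmid : ((g 0)^(n+1) * g 1 * ((g 0)^(n+1))⁻¹)⁻¹ *
          (((g 0)^(n+1) * g 1 * ((g 0)^(n+1))⁻¹)⁻¹ *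
            (((g 0)^(n+1) * (g 1 * g 0 * (g 1)⁻¹) * ((g 0)^(n+1))⁻¹) *
              (((g 0)^(n+1) * g 1 * ((g 0)^(n+1))⁻¹) * ((g 0)^(n+1) * g 1 * ((g 0)^(n+1))⁻¹))))
          = (g 0)^(n+1) * ((g 1)⁻¹ * g 0 * g 1) * ((g 0)^(n+1))⁻¹ := by group
      rw [hmid, relR2]
      group
    · rw [hl3]
      have hcomm : (g (letterOf (n + 3)) * (g (letterOf (n + 3)) * gp (wordOfExpSeq G₂)))⁻¹ *
          g (letterOf (n + 3)) *
          (g (letterOf (n + 3)) * (g (letterOf (n + 3)) * gp (wordOfExpSeq G₂)))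
          = (gp (wordOfExpSeq G₂))⁻¹ * g (letterOf (n + 3)) * gp (wordOfExpSeq G₂) := by
        group
      rw [hcomm, ihA]
      have hmid : (g 0)^(n+1) * g 1 * ((g 0)^(n+1))⁻¹
          = (g 0)^(n+1+1) * ((g 0)⁻¹ * g 1 * g 0) * ((g 0)^(n+1+1))⁻¹ := by group
      rw [hmid, relR1]

/-! The quotient lemmas. -/

lemma quot1 (F : List ℕ) (e : ℕ) :
    ∃ w, SigmaPos w ∧
      evalSW w = (gp (wordOfExpSeq (F ++ [e])))⁻¹ * gp (wordOfExpSeq (F ++ [e + 1])) := by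
  refine ⟨[(0, true)], ⟨0, by simp, by simp, by simp⟩, ?_⟩
  rw [wordOfExpSeq_append, wordOfExpSeq_append, evalSW_single_true]
  rw [show ([e] : List ℕ).length = 1 from rfl, show ([e+1] : List ℕ).length = 1 from rfl]
  rw [wordOfExpSeq_cons, wordOfExpSeq_cons, wordOfExpSeq_nil]
  rw [show letterOf (List.length ([] : List ℕ) + 1) = 0 from by norm_num [letterOf]]
  simp only [List.append_nil]
  rw [gp_append, gp_append, gp_replicate, gp_replicate]
  group

lemma quot2 (F G₂ : List ℕ) (e m t : ℕ)
    (hmin : ∀ k, 1 ≤ k → k ≤ (m :: G₂).length → expAt (m :: G₂) k = emin k) :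
    ∃ w, SigmaPos w ∧ evalSW w =
      (gp (wordOfExpSeq (F ++ e :: (m + t) :: G₂)))⁻¹ *
        gp (wordOfExpSeq (F ++ (e + 1) :: m :: G₂)) := by
  rcases G₂ with _ | ⟨c, G₂'⟩
  · -- breadth-2 case
    have hm : m = 0 := hmin 1 (by omega) (by simp)
    subst hm
    refine ⟨List.replicate t (0, false) ++ [(1, true)],
      ⟨1, by simp, by simp [List.mem_replicate], fun l _ => fin2_le_one l.1⟩, ?_⟩
    rw [evalSW_append, evalSW_rep_false, evalSW_single_true]
    rw [wordOfExpSeq_append, wordOfExpSeq_append]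
    rw [show ((e : ℕ) :: (0 + t) :: []).length = 2 from rfl,
      show ((e + 1 : ℕ) :: 0 :: []).length = 2 from rfl]
    rw [wordOfExpSeq_cons, wordOfExpSeq_cons, wordOfExpSeq_cons, wordOfExpSeq_cons,
      wordOfExpSeq_nil]
    rw [show letterOf (List.length ([] : List ℕ) + 1) = 0 from by norm_num [letterOf],
      show letterOf (List.length [(0 : ℕ) + t] + 1) = 1 from by norm_num [letterOf],
      show letterOf (List.length [(0 : ℕ)] + 1) = 1 from by norm_num [letterOf]]
    simp only [List.append_nil]
    rw [gp_append, gp_append, gp_append, gp_append, gp_replicate, gp_replicate,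
      gp_replicate, gp_replicate]
    rw [show (0 : ℕ) + t = t from by omega, pow_zero]
    group
  · -- general case
    obtain ⟨tcA, tcB⟩ := tail_conj G₂'.length (m :: c :: G₂') (by simp) hmin
    have hWcons : gp (wordOfExpSeq (m :: c :: G₂'))
        = (g (letterOf (G₂'.length + 2)))^m * gp (wordOfExpSeq (c :: G₂')) := by
      rw [wordOfExpSeq_cons, gp_append, gp_replicate]
      rfl
    have hw2 : gp (wordOfExpSeq (F ++ (e + 1) :: m :: c :: G₂'))
        = gp (wshift F (G₂'.length + 3)) *
          ((g (letterOf (G₂'.length + 3)))^(e+1) *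
            ((g (letterOf (G₂'.length + 2)))^m * gp (wordOfExpSeq (c :: G₂')))) := by
      rw [wordOfExpSeq_append, gp_append, wordOfExpSeq_cons, gp_append, gp_replicate, hWcons]
      rfl
    have hw1 : gp (wordOfExpSeq (F ++ e :: (m + t) :: c :: G₂'))
        = gp (wshift F (G₂'.length + 3)) *
          ((g (letterOf (G₂'.length + 3)))^e *
            ((g (letterOf (G₂'.length + 2)))^(m+t) * gp (wordOfExpSeq (c :: G₂')))) := by
      rw [wordOfExpSeq_append, gp_append, wordOfExpSeq_cons, gp_append, gp_replicate,
        wordOfExpSeq_cons, gp_append, gp_replicate]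
      rfl
    refine ⟨List.replicate (G₂'.length + 1) (0, true) ++
        (1, true) :: List.replicate (t + (G₂'.length + 1)) (0, false),
      ⟨1, by simp, by simp [List.mem_replicate], fun l _ => fin2_le_one l.1⟩, ?_⟩
    rw [evalSW_witness, hw1, hw2]
    rw [hWcons] at tcA tcB
    have hquot : ∀ A W₂ a bb : B3,
        (A * (a^e * (bb^(m+t) * W₂)))⁻¹ * (A * (a^(e+1) * (bb^m * W₂)))
          = (bb^m*W₂)⁻¹ * ((bb⁻¹)^t * (a * (bb^m*W₂))) := fun A W₂ a bb => by group
    rw [hquot]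
    set u := (g (0 : Fin 2))^(G₂'.length + 1) with hu
    set a := g (letterOf (G₂'.length + 3)) with ha
    set bb := g (letterOf (G₂'.length + 2)) with hbb
    set W₂ := gp (wordOfExpSeq (c :: G₂')) with hW₂
    have hBt : (bb^m * W₂)⁻¹ * (bb⁻¹)^t * (bb^m * W₂)
        = u * (g 1 * ((g 0)⁻¹)^t * (g 1)⁻¹) * u⁻¹ := by
      have h1 : (bb^m * W₂)⁻¹ * (bb⁻¹)^t * (bb^m * W₂)
          = ((bb^m * W₂)⁻¹ * bb⁻¹ * (bb^m * W₂))^t := by rw [conjp]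
      have h2 : (bb^m * W₂)⁻¹ * bb⁻¹ * (bb^m * W₂)
          = u⁻¹⁻¹ * ((g 1)⁻¹⁻¹ * (g 0)⁻¹ * (g 1)⁻¹) * u⁻¹ := by
        have h3 : (bb^m * W₂)⁻¹ * bb⁻¹ * (bb^m * W₂)
            = ((bb^m * W₂)⁻¹ * bb * (bb^m * W₂))⁻¹ := by group
        rw [h3, tcB]; group
      rw [h1, h2, conjp]
      have h4 : ((g 1)⁻¹⁻¹ * (g 0)⁻¹ * (g 1)⁻¹)^t
          = (g 1)⁻¹⁻¹ * ((g 0)⁻¹)^t * (g 1)⁻¹ := conjp ((g 1)⁻¹) ((g 0)⁻¹) t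
      rw [h4]; group
    have hfin : (bb^m * W₂)⁻¹ * ((bb⁻¹)^t * (a * (bb^m * W₂)))
        = ((bb^m * W₂)⁻¹ * (bb⁻¹)^t * (bb^m * W₂)) *
          ((bb^m * W₂)⁻¹ * a * (bb^m * W₂)) := by group
    rw [hfin, hBt, tcA, hu]
    group

/-! critPos facts. -/

lemma critPos_spec (E : List ℕ) (hE : IsNormalSeq E) :
    1 ≤ critPos E ∧ critPos E ≤ E.length ∧ 1 ≤ expAt E (critPos E) ∧
      ∀ k, 1 ≤ k → k < critPos E → expAt E k = emin k := by
  classical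
  obtain ⟨hne, hlead, hnorm⟩ := hE
  have hlen : 1 ≤ E.length := by
    cases E with
    | nil => exact absurd rfl hne
    | cons a l => simp
  unfold critPos
  split_ifs with hex
  · have hs := Nat.find_spec hex
    refine ⟨hs.1, le_of_lt hs.2.1, by omega, ?_⟩
    intro k hk1 hk2
    have hm := Nat.find_min hex hk2
    have hk3 : k < E.length := lt_trans hk2 hs.2.1
    have h5 := hnorm k hk1 hk3
    omega
  · push_neg at hex
    refine ⟨hlen, le_refl _, hlead, ?_⟩
    intro k hk1 hk2
    have h5 := hnorm k hk1 hk2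
    have h6 := hex k hk1 hk2
    omega

/-! Positivity: 1 < b for every nontrivial positive b given by a nonempty word. -/

lemma blt_one_mkw (w : List (Fin 2)) (hw : w ≠ []) : blt 1 (mkw w) := by
  show ∃ sw, SigmaPos sw ∧ evalSW sw = (ι 1)⁻¹ * ι (mkw w)
  have hv : (ι (1 : B3P))⁻¹ * ι (mkw w) = gp w := by
    rw [map_one, inv_one, one_mul, iota_mkw]
  refine ⟨w.map (fun i => (i, true)), ?_, by rw [hv, evalSW_pos]⟩
  by_cases h1 : (1 : Fin 2) ∈ w
  · exact ⟨1, List.mem_map.mpr ⟨1, h1, rfl⟩, by simp, fun l _ => fin2_le_one l.1⟩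
  · obtain ⟨a, ha⟩ := List.exists_mem_of_ne_nil w hw
    have ha0 : a = 0 := by
      rcases fin2_cases a with h | h
      · exact h
      · exact absurd (h ▸ ha) h1
    refine ⟨0, List.mem_map.mpr ⟨0, ha0 ▸ ha, rfl⟩, by simp, ?_⟩
    intro l hl
    obtain ⟨i, hiw, rfl⟩ := List.mem_map.mp hl
    rcases fin2_cases i with h | h
    · simp [h]
    · exact absurd (h ▸ hiw) h1

end StepLtAux

/-- For every nontrivial braid b in B₃⁺ and every t, b{t} < b in the braid order. -/
theorem step_lt (b : B3P) (hb : b ≠ 1) (t : ℕ) : blt (step b t) b := by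
  classical
  by_cases h : ∃ E, HasExpSeq b E
  · -- b has an exponent sequence
    have hexp : HasExpSeq b (expSeqOf b) := by
      unfold expSeqOf
      rw [dif_pos h]
      exact h.choose_spec
    obtain ⟨E, hEeq⟩ : ∃ E, expSeqOf b = E := ⟨_, rfl⟩
    rw [hEeq] at hexp
    obtain ⟨hnorm, hmk⟩ := hexp
    have hstep : step b t = mkw (wordOfExpSeq (stepSeq E t)) := by
      unfold step
      rw [if_neg hb, hEeq]
    obtain ⟨h1, h2, h3, h4⟩ := critPos_spec E hnorm
    obtain ⟨r, hr⟩ : ∃ r, critPos E = r := ⟨_, rfl⟩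
    rw [hr] at h1 h2 h3 h4
    have hgoal : ∀ w', SigmaPos w' →
        evalSW w' = (gp (wordOfExpSeq (stepSeq E t)))⁻¹ * gp (wordOfExpSeq E) →
        blt (step b t) b := by
      intro w' hpos hval
      show ∃ sw, SigmaPos sw ∧ evalSW sw = (ι (step b t))⁻¹ * ι b
      refine ⟨w', hpos, ?_⟩
      rw [hstep, iota_mkw, ← hmk, iota_mkw]
      exact hval
    obtain ⟨F, er, G, hsplit, hFlen, hGlen0⟩ := split_at E (E.length - r) (by omega)
    have hGlen : G.length = r - 1 := by omega
    have her_val : expAt E r = er := by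
      rw [show r = G.length + 1 from by omega, hsplit]
      exact expAt_append_head F er G
    have her1 : 1 ≤ er := by rw [← her_val]; exact h3
    rcases Nat.lt_or_ge r 2 with hrlt | hr2
    · -- r = 1
      have hGnil : G = [] := List.eq_nil_of_length_eq_zero (by omega)
      have hss : stepSeq E t = F ++ [er - 1] := by
        unfold stepSeq
        rw [hr, if_neg (show ¬ 2 ≤ r from by omega), her_val]
        rw [show E.length - r = F.length + 0 from by omega]
        rw [hsplit, set_append', hGnil]
        rfl
      obtain ⟨w', hpos, hval⟩ := quot1 F (er - 1)
      rw [show er - 1 + 1 = er from by omega] at hval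
      refine hgoal w' hpos ?_
      rw [hss, hsplit, hGnil]
      exact hval
    · -- r ≥ 2
      obtain ⟨m, G₂, hGm⟩ : ∃ m G₂, G = m :: G₂ := by
        rcases G with _ | ⟨m, G₂⟩
        · exfalso; simp at hGlen; omega
        · exact ⟨m, G₂, rfl⟩
      have hG₂len : G₂.length = r - 2 := by
        have := hGlen; rw [hGm] at this; simp at this; omega
      have hm_val : expAt E (r - 1) = m := by
        calc expAt E (r - 1) = expAt (F ++ er :: G) (r - 1) := by rw [← hsplit]
          _ = expAt G (r - 1) := expAt_append_tail F er G _ (by omega)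
          _ = m := by
              rw [hGm, show r - 1 = G₂.length + 1 from by omega]
              exact expAt_head m G₂
      have hss : stepSeq E t = F ++ (er - 1) :: (m + t) :: G₂ := by
        unfold stepSeq
        rw [hr, if_pos hr2, her_val, hm_val]
        rw [show E.length - r = F.length + 0 from by omega,
          show E.length - (r - 1) = F.length + 1 from by omega]
        rw [hsplit, set_append']
        rw [show ((er :: G).set 0 (er - 1)) = (er - 1) :: G from rfl]
        rw [set_append', hGm]
        rfl
      have hminG : ∀ k, 1 ≤ k → k ≤ (m :: G₂).length → expAt (m :: G₂) k = emin k := by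
        intro k hk1 hk2
        have hkG : k ≤ G.length := by rw [hGm]; exact hk2
        calc expAt (m :: G₂) k = expAt G k := by rw [hGm]
          _ = expAt (F ++ er :: G) k := (expAt_append_tail F er G k hkG).symm
          _ = expAt E k := by rw [← hsplit]
          _ = emin k := h4 k hk1 (by omega)
      obtain ⟨w', hpos, hval⟩ := quot2 F G₂ (er - 1) m t hminG
      rw [show er - 1 + 1 = er from by omega] at hval
      refine hgoal w' hpos ?_
      rw [hss, hsplit, hGm]
      exact hval
  · -- degenerate case: step b t = 1
    have hexp : expSeqOf b = [] := by
      unfold expSeqOf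
      rw [dif_neg h]
    have hcp : critPos ([] : List ℕ) = 0 := by
      unfold critPos
      rw [dif_neg]
      · rfl
      · rintro ⟨r, hr1, hr2, -⟩
        simp at hr2
    have hss : stepSeq ([] : List ℕ) t = [] := by
      unfold stepSeq
      simp [hcp]
    have hstep : step b t = 1 := by
      unfold step
      rw [if_neg hb, hexp, hss]
      exact mkw_nil
    rw [hstep]
    obtain ⟨mfm, hm⟩ := Con.mk'_surjective (c := braidCon) b
    have hb' : b = mkw mfm.toList := by
      rw [mkw, FreeMonoid.ofList_toList, hm]
    have hne : mfm.toList ≠ [] := by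
      intro hc
      apply hb
      rw [hb', hc, mkw_nil]
    rw [hb']
    exact blt_one_mkw _ hne

end Braid3
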